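/- Let s : {1,2,...} → ℕ satisfy s_k ≥ 1 and let σ : {1,2,...} → ℝ satisfy σ_k > 0. Let p_0 ∈ (1,∞) and suppose there is ε > 0 with [p_0−ε, p_0+ε] ⊂ (1,∞) such that M_p(σ,s) > 0 for all p ∈ [p_0−ε, p_0+ε]. For each fixed index k ≥ 1, define the value of the optimal density on the k-th shell by ρ*_p(k) := (σ_k s_k / M_p(σ,s))^{-1/(p−1)} for p ∈ [p_0−ε, p_0+ε]. Then the function p ↦ ρ*_p(k) is continuous at p_0. -/

import Mathlib

open scoped ENNReal NNReal

/-- The radially symmetric `p`-modulus `M_p(σ, s)` of the family of infinite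
descending paths in a radially symmetric infinite tree whose `k`-th shell has
`s k` edges, each of weight `σ k`: the infimum of the `p`-energies
`Σ_k s_k σ_k ρ_k^p` over all densities `ρ` with `Σ_k ρ_k ≥ 1`. -/
noncomputable def Mmod (p : ℝ) (σ : ℕ → ℝ≥0) (s : ℕ → ℕ) : ℝ≥0∞ :=
  ⨅ ρ ∈ {ρ : ℕ → ℝ≥0 | 1 ≤ ∑' k : ℕ, (ρ k : ℝ≥0∞)},
    ∑' k : ℕ, (s k : ℝ≥0∞) * (σ k : ℝ≥0∞) * (ρ k : ℝ≥0∞) ^ p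

open Filter Topology MeasureTheory

namespace Stmt14Aux

/-- The weight of one edge-layer: `s k * σ k`, as an extended nonneg real. -/
noncomputable def aw (σ : ℕ → ℝ≥0) (s : ℕ → ℕ) (k : ℕ) : ℝ≥0∞ :=
  (s k : ℝ≥0∞) * (σ k : ℝ≥0∞)

/-- The `k`-th term of the characteristic series: `(s k * σ k) ^ (-(1/(p-1)))`. -/
noncomputable def tt (σ : ℕ → ℝ≥0) (s : ℕ → ℕ) (p : ℝ) (k : ℕ) : ℝ≥0∞ :=
  aw σ s k ^ (-(1 / (p - 1)))

/-- The characteristic series `S p = Σ_k (s k σ k)^(-(1/(p-1)))`. -/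
noncomputable def S (σ : ℕ → ℝ≥0) (s : ℕ → ℕ) (p : ℝ) : ℝ≥0∞ :=
  ∑' k, tt σ s p k

variable {σ : ℕ → ℝ≥0} {s : ℕ → ℕ} {p : ℝ}

lemma aw_ne_zero (hs : ∀ k, 1 ≤ s k) (hσ : ∀ k, 0 < σ k) (k : ℕ) : aw σ s k ≠ 0 :=
  mul_ne_zero (Nat.cast_ne_zero.2 (by have := hs k; omega))
    (ENNReal.coe_ne_zero.2 (hσ k).ne')

lemma aw_ne_top (k : ℕ) : aw σ s k ≠ ∞ :=
  ENNReal.mul_ne_top (ENNReal.natCast_ne_top _) ENNReal.coe_ne_top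

lemma tt_pos (hs : ∀ k, 1 ≤ s k) (hσ : ∀ k, 0 < σ k) (k : ℕ) : 0 < tt σ s p k :=
  ENNReal.rpow_pos (pos_iff_ne_zero.2 (aw_ne_zero hs hσ k)) (aw_ne_top k)

lemma tt_ne_top (hs : ∀ k, 1 ≤ s k) (hσ : ∀ k, 0 < σ k) (k : ℕ) : tt σ s p k ≠ ∞ := by
  rw [tt, ← neg_neg (1 / (p - 1)), neg_neg, ENNReal.rpow_neg]
  exact ENNReal.inv_ne_top.2
    (ENNReal.rpow_pos (pos_iff_ne_zero.2 (aw_ne_zero hs hσ k)) (aw_ne_top k)).ne'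

lemma S_pos (hs : ∀ k, 1 ≤ s k) (hσ : ∀ k, 0 < σ k) : 0 < S σ s p :=
  (tt_pos hs hσ 0).trans_le (ENNReal.le_tsum 0)

lemma aw_mul_tt_rpow (hs : ∀ k, 1 ≤ s k) (hσ : ∀ k, 0 < σ k) (hp : 1 < p) (k : ℕ) :
    aw σ s k * tt σ s p k ^ p = tt σ s p k := by
  have h0 := aw_ne_zero hs hσ k
  have hT := aw_ne_top (σ := σ) (s := s) k
  have hp1 : p - 1 ≠ 0 := sub_ne_zero.2 hp.ne'
  rw [tt, ← ENNReal.rpow_mul]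
  calc aw σ s k * aw σ s k ^ (-(1 / (p - 1)) * p)
      = aw σ s k ^ (1 : ℝ) * aw σ s k ^ (-(1 / (p - 1)) * p) := by rw [ENNReal.rpow_one]
    _ = aw σ s k ^ (1 + -(1 / (p - 1)) * p) := (ENNReal.rpow_add _ _ h0 hT).symm
    _ = aw σ s k ^ (-(1 / (p - 1))) := by congr 1; field_simp; ring

/-- Upper bound on the modulus by truncated near-extremal densities. -/
lemma Mmod_le_partial (hs : ∀ k, 1 ≤ s k) (hσ : ∀ k, 0 < σ k) (hp : 1 < p) (N : ℕ) :
    Mmod p σ s ≤ (∑ k ∈ Finset.range (N + 1), tt σ s p k) ^ (1 - p) := by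
  classical
  set SN := ∑ k ∈ Finset.range (N + 1), tt σ s p k with hSN
  have hSN0 : SN ≠ 0 := by
    refine fun h => (tt_pos hs hσ (p := p) 0).ne' ?_
    exact Finset.sum_eq_zero_iff.1 h 0 (Finset.mem_range.2 (Nat.succ_pos N))
  have hSNT : SN ≠ ∞ :=
    (ENNReal.sum_lt_top.2 fun k _ => (tt_ne_top hs hσ k).lt_top).ne
  set ρ : ℕ → ℝ≥0 := fun k =>
    if k < N + 1 then (tt σ s p k / SN).toNNReal else 0 with hρdef
  have hρcoe : ∀ k, (ρ k : ℝ≥0∞) = if k < N + 1 then tt σ s p k / SN else 0 := by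
    intro k
    by_cases h : k < N + 1
    · simp only [hρdef, h, if_true]
      exact ENNReal.coe_toNNReal
        (ENNReal.div_lt_top (tt_ne_top hs hσ k) hSN0).ne
    · simp [hρdef, h]
      exact fun hk => absurd hk (by omega)
  have hvanish : ∀ k ∉ Finset.range (N + 1), (ρ k : ℝ≥0∞) = 0 := by
    intro k hk
    rw [hρcoe k, if_neg (by simpa using hk)]
  have hsum : ∑' k, (ρ k : ℝ≥0∞) = 1 := by
    rw [tsum_eq_sum hvanish]
    have : ∀ k ∈ Finset.range (N + 1), (ρ k : ℝ≥0∞) = tt σ s p k * SN⁻¹ := by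
      intro k hk
      rw [hρcoe k, if_pos (Finset.mem_range.1 hk), div_eq_mul_inv]
    rw [Finset.sum_congr rfl this, ← Finset.sum_mul, ← hSN, ENNReal.mul_inv_cancel hSN0 hSNT]
  have hmem : ρ ∈ {ρ : ℕ → ℝ≥0 | 1 ≤ ∑' k : ℕ, (ρ k : ℝ≥0∞)} := by
    rw [Set.mem_setOf_eq, hsum]
  refine le_trans (biInf_le _ hmem) (le_of_eq ?_)
  have hterm : ∀ k, (s k : ℝ≥0∞) * (σ k : ℝ≥0∞) * (ρ k : ℝ≥0∞) ^ p
      = if k < N + 1 then tt σ s p k * (SN ^ p)⁻¹ else 0 := by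
    intro k
    by_cases h : k < N + 1
    · rw [hρcoe k, if_pos h, if_pos h]
      have : ((s k : ℝ≥0∞) * (σ k : ℝ≥0∞)) = aw σ s k := rfl
      rw [this, ENNReal.div_rpow_of_nonneg _ _ (by linarith : (0:ℝ) ≤ p),
        div_eq_mul_inv, ← mul_assoc, aw_mul_tt_rpow hs hσ hp]
    · rw [hρcoe k, if_neg h, if_neg h,
        ENNReal.zero_rpow_of_pos (by linarith : (0:ℝ) < p), mul_zero]
  calc ∑' k, (s k : ℝ≥0∞) * (σ k : ℝ≥0∞) * (ρ k : ℝ≥0∞) ^ p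
      = ∑ k ∈ Finset.range (N + 1), tt σ s p k * (SN ^ p)⁻¹ := by
        rw [tsum_congr hterm, tsum_eq_sum (s := Finset.range (N + 1))
          (fun k hk => if_neg (by simpa using hk))]
        exact Finset.sum_congr rfl fun k hk => if_pos (Finset.mem_range.1 hk)
    _ = SN * (SN ^ p)⁻¹ := by rw [← Finset.sum_mul]
    _ = SN ^ (1 - p) := by
        rw [sub_eq_add_neg, ENNReal.rpow_add _ _ hSN0 hSNT, ENNReal.rpow_one,
          ENNReal.rpow_neg]

/-- Hölder lower bound for the energy of any admissible density. -/
lemma le_energy (hs : ∀ k, 1 ≤ s k) (hσ : ∀ k, 0 < σ k) (hp : 1 < p)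
    (ρ : ℕ → ℝ≥0) (hρ : 1 ≤ ∑' k : ℕ, (ρ k : ℝ≥0∞)) :
    S σ s p ^ (1 - p) ≤ ∑' k : ℕ, (s k : ℝ≥0∞) * (σ k : ℝ≥0∞) * (ρ k : ℝ≥0∞) ^ p := by
  by_cases hStop : S σ s p = ∞
  · rw [hStop, ENNReal.top_rpow_of_neg (by linarith)]
    exact zero_le
  have hp0 : (p : ℝ) ≠ 0 := by positivity
  have hp1 : p - 1 ≠ 0 := sub_ne_zero.2 hp.ne'
  have hpq : p.HolderConjugate (p / (p - 1)) := Real.HolderConjugate.conjExponent hp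
  set q : ℝ := p / (p - 1) with hq
  set f : ℕ → ℝ≥0∞ := fun k => aw σ s k ^ (1 / p) * (ρ k : ℝ≥0∞) with hf
  set g : ℕ → ℝ≥0∞ := fun k => aw σ s k ^ (-(1 / p)) with hg
  have hfg : ∀ k, (f * g) k = (ρ k : ℝ≥0∞) := by
    intro k
    have : aw σ s k ^ (1 / p) * aw σ s k ^ (-(1 / p)) = 1 := by
      rw [← ENNReal.rpow_add _ _ (aw_ne_zero hs hσ k) (aw_ne_top k), add_neg_cancel,
        ENNReal.rpow_zero]
    simp only [Pi.mul_apply, hf, hg]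
    rw [mul_comm (aw σ s k ^ (1 / p)) ((ρ k : ℝ≥0∞)), mul_assoc, this, mul_one]
  have hfp : ∀ k, f k ^ p = (s k : ℝ≥0∞) * (σ k : ℝ≥0∞) * (ρ k : ℝ≥0∞) ^ p := by
    intro k
    simp only [hf]
    rw [ENNReal.mul_rpow_of_nonneg _ _ (by linarith : (0:ℝ) ≤ p), ← ENNReal.rpow_mul,
      one_div, inv_mul_cancel₀ hp0, ENNReal.rpow_one]
    rfl
  have hgq : ∀ k, g k ^ q = tt σ s p k := by
    intro k
    simp only [hg]
    rw [tt, ← ENNReal.rpow_mul]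
    congr 1
    rw [hq]
    field_simp
  have H := ENNReal.lintegral_mul_le_Lp_mul_Lq (Measure.count : Measure ℕ) hpq
    (measurable_of_countable f).aemeasurable (measurable_of_countable g).aemeasurable
  rw [lintegral_count, lintegral_count, lintegral_count] at H
  rw [tsum_congr hfg, tsum_congr hfp, tsum_congr hgq] at H
  set E := ∑' k : ℕ, (s k : ℝ≥0∞) * (σ k : ℝ≥0∞) * (ρ k : ℝ≥0∞) ^ p with hE
  have H1 : 1 ≤ E ^ (1 / p) * S σ s p ^ (1 / q) := le_trans hρ H
  have hS0 : S σ s p ≠ 0 := (S_pos hs hσ).ne'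
  have hc0 : S σ s p ^ (1 / q) ≠ 0 := (ENNReal.rpow_pos (S_pos hs hσ) hStop).ne'
  have hcT : S σ s p ^ (1 / q) ≠ ∞ :=
    ENNReal.rpow_ne_top_of_nonneg (one_div_nonneg.2 hpq.symm.pos.le) hStop
  have H2 : (S σ s p ^ (1 / q))⁻¹ ≤ E ^ (1 / p) := by
    have := mul_le_mul_left H1 (S σ s p ^ (1 / q))⁻¹
    rwa [one_mul, mul_assoc, ENNReal.mul_inv_cancel hc0 hcT, mul_one] at this
  have H3 : ((S σ s p ^ (1 / q))⁻¹) ^ p ≤ (E ^ (1 / p)) ^ p :=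
    ENNReal.rpow_le_rpow H2 (by linarith)
  have hL : ((S σ s p ^ (1 / q))⁻¹) ^ p = S σ s p ^ (1 - p) := by
    rw [ENNReal.inv_rpow, ← ENNReal.rpow_mul, ← ENNReal.rpow_neg]
    congr 1
    rw [hq]
    field_simp
    ring
  have hR : (E ^ (1 / p)) ^ p = E := by
    rw [← ENNReal.rpow_mul, one_div, inv_mul_cancel₀ hp0, ENNReal.rpow_one]
  rwa [hL, hR] at H3

/-- The explicit formula for the radially symmetric modulus. -/
theorem Mmod_eq (hs : ∀ k, 1 ≤ s k) (hσ : ∀ k, 0 < σ k) (hp : 1 < p) :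
    Mmod p σ s = S σ s p ^ (1 - p) := by
  refine le_antisymm ?_ ?_
  · have htend : Tendsto (fun N : ℕ => (∑ k ∈ Finset.range (N + 1), tt σ s p k) ^ (1 - p))
        atTop (𝓝 (S σ s p ^ (1 - p))) := by
      have h1 : Tendsto (fun N : ℕ => ∑ k ∈ Finset.range (N + 1), tt σ s p k) atTop
          (𝓝 (S σ s p)) :=
        (ENNReal.tendsto_nat_tsum _).comp (tendsto_add_atTop_nat 1)
      exact (ENNReal.continuous_rpow_const.tendsto _).comp h1
    exact ge_of_tendsto htend (Eventually.of_forall fun N => Mmod_le_partial hs hσ hp N)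
  · exact le_iInf fun ρ => le_iInf fun hρ => le_energy hs hσ hp ρ hρ

/-- For a positive base, `y ↦ a ^ y` is continuous. -/
lemma continuous_const_rpow_exp {a : ℝ} (ha : 0 < a) :
    Continuous fun y : ℝ => a ^ y := by
  have : (fun y : ℝ => a ^ y) = fun y => Real.exp (Real.log a * y) :=
    funext fun y => Real.rpow_def_of_pos ha y
  rw [this]
  exact Real.continuous_exp.comp (continuous_const.mul continuous_id)

end Stmt14Aux

/-- under the hypotheses of Statement 13, for each fixed shell `k`,
the value `ρ*_p(k) = (σ_k s_k / M_p(σ,s))^{-1/(p-1)}` of the optimal density is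
continuous in `p` at `p₀`. -/
theorem stmt14 (s : ℕ → ℕ) (hs : ∀ k, 1 ≤ s k) (σ : ℕ → ℝ≥0) (hσ : ∀ k, 0 < σ k)
    (p₀ ε : ℝ) (hε : 0 < ε) (h1 : 1 < p₀ - ε)
    (hpos : ∀ p ∈ Set.Icc (p₀ - ε) (p₀ + ε), 0 < Mmod p σ s) (k : ℕ) :
    ContinuousAt
      (fun p : ℝ =>
        (((σ k : ℝ≥0∞) * (s k : ℝ≥0∞)) / Mmod p σ s) ^ (-(1 / (p - 1)))) p₀ := by
  classical
  open Stmt14Aux in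
  have hp₀1 : 1 < p₀ := by linarith
  have hp₀Icc : p₀ ∈ Set.Icc (p₀ - ε) (p₀ + ε) := ⟨by linarith, by linarith⟩
  -- finiteness of the characteristic series on the closed interval
  have hSfin : ∀ p ∈ Set.Icc (p₀ - ε) (p₀ + ε), S σ s p ≠ ∞ := by
    intro p hp hStop
    have hp1 : 1 < p := lt_of_lt_of_le h1 hp.1
    have hM := hpos p hp
    rw [Mmod_eq hs hσ hp1, hStop, ENNReal.top_rpow_of_neg (by linarith)] at hM
    exact lt_irrefl _ hM
  set A : ℕ → ℝ := fun j => (s j : ℝ) * (σ j : ℝ) with hA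
  have hApos : ∀ j, 0 < A j :=
    fun j => mul_pos (by exact_mod_cast Nat.lt_of_lt_of_le Nat.zero_lt_one (hs j)) (hσ j)
  have hAtoReal : ∀ j, (aw σ s j).toReal = A j := by
    intro j; simp [aw, hA, ENNReal.toReal_mul]
  have hAofReal : ∀ j, ENNReal.ofReal (A j) = aw σ s j := by
    intro j; rw [← hAtoReal j, ENNReal.ofReal_toReal (aw_ne_top j)]
  -- the clamp of `p` to the closed interval
  set u : ℝ → ℝ := fun p => min (max p (p₀ - ε)) (p₀ + ε) with hu
  have hu_cont : Continuous u := (continuous_id.max continuous_const).min continuous_const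
  have hu_mem : ∀ p, u p ∈ Set.Icc (p₀ - ε) (p₀ + ε) := fun p =>
    ⟨le_min (le_max_right _ _) (by linarith), min_le_right _ _⟩
  have hu_eq : ∀ p ∈ Set.Icc (p₀ - ε) (p₀ + ε), u p = p := by
    intro p hp
    simp only [hu]
    rw [max_eq_left hp.1, min_eq_left hp.2]
  -- the exponent
  set e : ℝ → ℝ := fun p => -(1 / (p - 1)) with he
  have he_mono : ∀ x ∈ Set.Icc (p₀ - ε) (p₀ + ε), ∀ y ∈ Set.Icc (p₀ - ε) (p₀ + ε),
      x ≤ y → e x ≤ e y := by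
    intro x hx y hy hxy
    have hx1 : 0 < x - 1 := by have := hx.1; linarith
    simp only [he]
    have : 1 / (y - 1) ≤ 1 / (x - 1) := one_div_le_one_div_of_le hx1 (by linarith)
    linarith
  -- the summand functions and their uniform bound
  set f : ℕ → ℝ → ℝ := fun j p => A j ^ e (u p) with hf
  have hf_toReal : ∀ p ∈ Set.Icc (p₀ - ε) (p₀ + ε), ∀ j, f j p = (tt σ s p j).toReal := by
    intro p hp j
    simp only [hf, hu_eq p hp, ← hAtoReal j]
    rw [ENNReal.toReal_rpow]
    rfl
  set g : ℕ → ℝ := fun j => f j (p₀ - ε) + f j (p₀ + ε) with hg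
  have hmemL : (p₀ - ε) ∈ Set.Icc (p₀ - ε) (p₀ + ε) := ⟨le_refl _, by linarith⟩
  have hmemR : (p₀ + ε) ∈ Set.Icc (p₀ - ε) (p₀ + ε) := ⟨by linarith, le_refl _⟩
  have hgsum : Summable g := by
    refine Summable.add ?_ ?_
    · have := ENNReal.summable_toReal (hSfin _ hmemL)
      exact this.congr fun j => (hf_toReal _ hmemL j).symm
    · have := ENNReal.summable_toReal (hSfin _ hmemR)
      exact this.congr fun j => (hf_toReal _ hmemR j).symm
  have hf_nonneg : ∀ j p, 0 ≤ f j p := fun j p => Real.rpow_nonneg (hApos j).le _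
  have hbound : ∀ j p, ‖f j p‖ ≤ g j := by
    intro j p
    rw [Real.norm_of_nonneg (hf_nonneg j p)]
    have h₁ : e (p₀ - ε) ≤ e (u p) := he_mono _ hmemL _ (hu_mem p) (hu_mem p).1
    have h₂ : e (u p) ≤ e (p₀ + ε) := he_mono _ (hu_mem p) _ hmemR (hu_mem p).2
    rcases le_total 1 (A j) with hAj | hAj
    · calc f j p ≤ A j ^ e (p₀ + ε) := Real.rpow_le_rpow_of_exponent_le hAj h₂
        _ = f j (p₀ + ε) := by simp only [hf, hu_eq _ hmemR]
        _ ≤ g j := le_add_of_nonneg_left (hf_nonneg j _)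
    · calc f j p ≤ A j ^ e (p₀ - ε) :=
          Real.rpow_le_rpow_of_exponent_ge (hApos j) hAj h₁
        _ = f j (p₀ - ε) := by simp only [hf, hu_eq _ hmemL]
        _ ≤ g j := le_add_of_nonneg_right (hf_nonneg j _)
  have hf_cont : ∀ j, Continuous (f j) := by
    intro j
    have heu : Continuous fun p => e (u p) := by
      have hne : ∀ p, u p - 1 ≠ 0 := fun p => by
        have := (hu_mem p).1; have : 1 < u p := by linarith
        linarith
      exact ((continuous_const.div (hu_cont.sub continuous_const) hne)).neg
    exact (continuous_const_rpow_exp (hApos j)).comp heu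
  -- the real-valued sum function
  set Sr : ℝ → ℝ := fun p => ∑' j, f j p with hSr
  have hSr_cont : Continuous Sr := continuous_tsum hf_cont hgsum hbound
  have hSr_toReal : ∀ p ∈ Set.Icc (p₀ - ε) (p₀ + ε), Sr p = (S σ s p).toReal := by
    intro p hp
    simp only [hSr]
    rw [tsum_congr (hf_toReal p hp), ← ENNReal.tsum_toReal_eq (fun j => tt_ne_top hs hσ j)]
    rfl
  have hSr_pos : ∀ p ∈ Set.Icc (p₀ - ε) (p₀ + ε), 0 < Sr p := by
    intro p hp
    rw [hSr_toReal p hp]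
    exact ENNReal.toReal_pos (S_pos hs hσ).ne' (hSfin p hp)
  have hSofReal : ∀ p ∈ Set.Icc (p₀ - ε) (p₀ + ε), ENNReal.ofReal (Sr p) = S σ s p := by
    intro p hp
    rw [hSr_toReal p hp, ENNReal.ofReal_toReal (hSfin p hp)]
  -- the continuous model function
  set G : ℝ → ℝ≥0∞ := fun p => ENNReal.ofReal (A k ^ e p * (Sr p)⁻¹) with hG
  have hG_cont : ContinuousAt G p₀ := by
    refine ENNReal.continuous_ofReal.continuousAt.comp ?_
    refine ContinuousAt.mul ?_ ?_
    · have he_cont : ContinuousAt e p₀ := by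
        refine ContinuousAt.neg ?_
        exact continuousAt_const.div (continuousAt_id.sub continuousAt_const)
          (sub_ne_zero.2 (by linarith : p₀ ≠ 1))
      exact ((continuous_const_rpow_exp (hApos k)).continuousAt).comp he_cont
    · exact (hSr_cont.continuousAt).inv₀ (hSr_pos p₀ hp₀Icc).ne'
  -- eventual equality of the target with the model function
  have heq : (fun p : ℝ =>
      (((σ k : ℝ≥0∞) * (s k : ℝ≥0∞)) / Mmod p σ s) ^ (-(1 / (p - 1)))) =ᶠ[𝓝 p₀] G := by
    have hV : Set.Ioo (p₀ - ε) (p₀ + ε) ∈ 𝓝 p₀ :=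
      Ioo_mem_nhds (by linarith) (by linarith)
    filter_upwards [hV] with p hp
    have hpIcc : p ∈ Set.Icc (p₀ - ε) (p₀ + ε) := ⟨hp.1.le, hp.2.le⟩
    have hp1 : 1 < p := lt_of_lt_of_le h1 hpIcc.1
    have hp1' : p - 1 ≠ 0 := sub_ne_zero.2 hp1.ne'
    have hS0 : S σ s p ≠ 0 := (S_pos hs hσ).ne'
    have hST : S σ s p ≠ ∞ := hSfin p hpIcc
    have hcomm : (σ k : ℝ≥0∞) * (s k : ℝ≥0∞) = aw σ s k := mul_comm _ _
    have hstep1 : ((σ k : ℝ≥0∞) * (s k : ℝ≥0∞)) / Mmod p σ s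
        = aw σ s k * S σ s p ^ (p - 1) := by
      rw [hcomm, Mmod_eq hs hσ hp1, div_eq_mul_inv, ← ENNReal.rpow_neg, neg_sub]
    have hpow_ne_top : S σ s p ^ (p - 1) ≠ ∞ :=
      ENNReal.rpow_ne_top_of_nonneg (by linarith) hST
    have hstep2 : (aw σ s k * S σ s p ^ (p - 1)) ^ (-(1 / (p - 1)))
        = aw σ s k ^ (-(1 / (p - 1))) * (S σ s p)⁻¹ := by
      rw [ENNReal.mul_rpow_of_ne_top (aw_ne_top k) hpow_ne_top, ← ENNReal.rpow_mul]
      congr 1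
      have : (p - 1) * -(1 / (p - 1)) = -1 := by field_simp
      rw [this, ENNReal.rpow_neg_one]
    have hstep3 : aw σ s k ^ (-(1 / (p - 1))) = ENNReal.ofReal (A k ^ e p) := by
      rw [← hAofReal k, ENNReal.ofReal_rpow_of_pos (hApos k)]
    have hstep4 : (S σ s p)⁻¹ = ENNReal.ofReal (Sr p)⁻¹ := by
      rw [← hSofReal p hpIcc, ← ENNReal.ofReal_inv_of_pos (hSr_pos p hpIcc)]
    rw [hstep1, hstep2, hstep3, hstep4, ← ENNReal.ofReal_mul (Real.rpow_nonneg (hApos k).le _)]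
  exact hG_cont.congr heq.symm
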